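/- (Theorem 3.1.1: classification of finite-type surfaces of the first family) There exist real constants λ₁, λ₂, λ₃ with Δ(r₁) = λ₁·t, Δ(r₂) = λ₂·a(t), Δ(r₃) = λ₃·s for all (t,s) ∈ I × ℝ (where r₁ = t, r₂ = a(t), r₃ = s) if and only if one of the following holds: (1) a″ ≡ 0 on I, i.e. a(t) = αt + β for some α, β ∈ ℝ (so S₁ has zero mean curvature), in which case λ₁ = λ₂ = λ₃ = 0; or (2) there exists c > 0 with t² + a(t)² = c for all t ∈ I, i.e. a(t) = ±√(c − t²) (the Euclidean circular cylinder), in which case λ₁ = λ₂ = 1/c and λ₃ = 0. -/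

import Mathlib

noncomputable section

/-- Partial derivative with respect to the first (t) variable. -/
def pdx (f : ℝ × ℝ → ℝ) : ℝ × ℝ → ℝ := fun p => fderiv ℝ f p (1, 0)

/-- Partial derivative with respect to the second (s) variable. -/
def pdy (f : ℝ × ℝ → ℝ) : ℝ × ℝ → ℝ := fun p => fderiv ℝ f p (0, 1)

/-- First fundamental form coefficient `E = 1 + a′² + ¼(a − t a′)²` of the ruled surface
`S₁ : r(t,s) = (t, a(t), s)` in the Heisenberg group `H₃`. -/
def aE (a : ℝ → ℝ) (t : ℝ) : ℝ := 1 + deriv a t ^ 2 + (a t - t * deriv a t) ^ 2 / 4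

/-- First fundamental form coefficient `F = ½(a − t a′)` of `S₁`. -/
def aF (a : ℝ → ℝ) (t : ℝ) : ℝ := (a t - t * deriv a t) / 2

/-- `W = √(EG − F²) = √(1 + a′²)` for `S₁` (here `G = 1`). -/
def aW (a : ℝ → ℝ) (t : ℝ) : ℝ := Real.sqrt (1 + deriv a t ^ 2)

/-- The Laplace–Beltrami operator of `S₁ : r(t,s) = (t, a(t), s)`, with the sign convention
`Δφ = −(1/W)[∂_t((G φ_t − F φ_s)/W) + ∂_s((−F φ_t + E φ_s)/W)]`, `G = 1`. -/
def lap1 (a : ℝ → ℝ) (φ : ℝ × ℝ → ℝ) : ℝ × ℝ → ℝ := fun p =>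
  -(1 / aW a p.1) *
    (pdx (fun q => (1 * pdx φ q - aF a q.1 * pdy φ q) / aW a q.1) p +
     pdy (fun q => (-(aF a q.1) * pdx φ q + aE a q.1 * pdy φ q) / aW a q.1) p)

/-- The finite-type system `Δr₁ = λ₁ t`, `Δr₂ = λ₂ a(t)`, `Δr₃ = λ₃ s` for the ruled surface
`S₁ : r(t,s) = (t, a(t), s)` in `H₃`. -/
def Sys1 (a : ℝ → ℝ) (I : Set ℝ) (l1 l2 l3 : ℝ) : Prop :=
  ∀ t ∈ I, ∀ s : ℝ,
    lap1 a (fun q => q.1) (t, s) = l1 * t ∧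
    lap1 a (fun q => a q.1) (t, s) = l2 * a t ∧
    lap1 a (fun q => q.2) (t, s) = l3 * s

lemma pdx_comp {g : ℝ → ℝ} {p : ℝ × ℝ} (hg : DifferentiableAt ℝ g p.1) :
    pdx (fun q => g q.1) p = deriv g p.1 := by
  have h : HasFDerivAt (fun q : ℝ × ℝ => g q.1)
      ((fderiv ℝ g p.1).comp (ContinuousLinearMap.fst ℝ ℝ ℝ)) p :=
    hg.hasFDerivAt.comp p hasFDerivAt_fst
  simp [pdx, h.fderiv, fderiv_apply_one_eq_deriv]

lemma pdy_comp {g : ℝ → ℝ} {p : ℝ × ℝ} (hg : DifferentiableAt ℝ g p.1) :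
    pdy (fun q => g q.1) p = 0 := by
  have h : HasFDerivAt (fun q : ℝ × ℝ => g q.1)
      ((fderiv ℝ g p.1).comp (ContinuousLinearMap.fst ℝ ℝ ℝ)) p :=
    hg.hasFDerivAt.comp p hasFDerivAt_fst
  simp [pdy, h.fderiv]

lemma pdx_fst (p : ℝ × ℝ) : pdx (fun q => q.1) p = 1 := by
  have : (fun q : ℝ × ℝ => q.1) = Prod.fst := rfl
  simp [pdx, this, fderiv_fst]
lemma pdy_fst (p : ℝ × ℝ) : pdy (fun q => q.1) p = 0 := by
  have : (fun q : ℝ × ℝ => q.1) = Prod.fst := rfl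
  simp [pdy, this, fderiv_fst]
lemma pdx_snd (p : ℝ × ℝ) : pdx (fun q => q.2) p = 0 := by
  have : (fun q : ℝ × ℝ => q.2) = Prod.snd := rfl
  simp [pdx, this, fderiv_snd]
lemma pdy_snd (p : ℝ × ℝ) : pdy (fun q => q.2) p = 1 := by
  have : (fun q : ℝ × ℝ => q.2) = Prod.snd := rfl
  simp [pdy, this, fderiv_snd]

lemma pdx_congr {f g : ℝ × ℝ → ℝ} {p : ℝ × ℝ} (h : f =ᶠ[nhds p] g) : pdx f p = pdx g p := by
  simp only [pdx]; rw [h.fderiv_eq]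

lemma pdy_congr {f g : ℝ × ℝ → ℝ} {p : ℝ × ℝ} (h : f =ᶠ[nhds p] g) : pdy f p = pdy g p := by
  simp only [pdy]; rw [h.fderiv_eq]

lemma aW_pos (a : ℝ → ℝ) (t : ℝ) : 0 < aW a t := Real.sqrt_pos.2 (by positivity)
lemma aW_sq (a : ℝ → ℝ) (t : ℝ) : aW a t ^ 2 = 1 + deriv a t ^ 2 := Real.sq_sqrt (by positivity)

section
variable {I : Set ℝ} (hI : IsOpen I) {a : ℝ → ℝ} (ha : ContDiffOn ℝ (⊤ : ℕ∞) a I)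
  {t : ℝ} (ht : t ∈ I)
include hI ha ht

lemma hda : HasDerivAt a (deriv a t) t :=
  (((ha.contDiffAt (hI.mem_nhds ht)).differentiableAt (by simp))).hasDerivAt

lemma hda' : HasDerivAt (deriv a) (deriv (deriv a) t) t := by
  have h2 : ContDiffOn ℝ (⊤ : ℕ∞) (deriv a) I := ha.deriv_of_isOpen hI (by simp)
  exact ((h2.contDiffAt (hI.mem_nhds ht)).differentiableAt (by simp)).hasDerivAt

lemma hdW : HasDerivAt (aW a) (deriv a t * deriv (deriv a) t / aW a t) t := by
  have hu : HasDerivAt (fun x => 1 + deriv a x ^ 2)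
      (2 * deriv a t * deriv (deriv a) t) t := by
    have := ((hda' hI ha ht).pow 2).const_add 1
    simpa [mul_comm, mul_assoc, pow_one] using this
  have h0 : (1 + deriv a t ^ 2) ≠ 0 := by positivity
  have := (Real.hasDerivAt_sqrt h0).comp t hu
  have heq : aW a = fun x => Real.sqrt (1 + deriv a x ^ 2) := rfl
  rw [heq]
  convert this using 1
  · rfl
  · rfl
  · rfl
  have hW0 : Real.sqrt (1 + deriv a t ^ 2) ≠ 0 := ne_of_gt (aW_pos a t)
  field_simp

lemma hdF : HasDerivAt (aF a) (-(t * deriv (deriv a) t) / 2) t := by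
  have h : HasDerivAt (fun x => (a x - x * deriv a x) / 2)
      ((deriv a t - (1 * deriv a t + t * deriv (deriv a) t)) / 2) t :=
    ((hda hI ha ht).sub ((hasDerivAt_id t).mul (hda' hI ha ht))).div_const 2
  have heq : aF a = fun x => (a x - x * deriv a x) / 2 := rfl
  rw [heq]
  convert h using 1
  ring

lemma diffE : DifferentiableAt ℝ (aE a) t := by
  have h1 := hda hI ha ht
  have h2 := hda' hI ha ht
  have heq : aE a = fun x => 1 + deriv a x ^ 2 + (a x - x * deriv a x) ^ 2 / 4 := rfl
  rw [heq]
  have hp : DifferentiableAt ℝ (fun x => (a x - x * deriv a x) ^ 2) t :=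
    ((h1.differentiableAt.sub (differentiableAt_id.mul h2.differentiableAt)).pow 2)
  exact ((h2.differentiableAt.pow 2).const_add 1).add (hp.div_const 4)

lemma lap1_eq1 (s : ℝ) :
    lap1 a (fun q => q.1) (t, s) =
      deriv a t * deriv (deriv a) t / (1 + deriv a t ^ 2) ^ 2 := by
  have hW := hdW hI ha ht
  have hWne : aW a t ≠ 0 := ne_of_gt (aW_pos a t)
  have e1 : (fun q : ℝ × ℝ => (1 * pdx (fun q => q.1) q - aF a q.1 * pdy (fun q => q.1) q)
      / aW a q.1) = fun q => (aW a q.1)⁻¹ := by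
    funext q; rw [pdx_fst, pdy_fst]; simp
  have e2 : (fun q : ℝ × ℝ => (-(aF a q.1) * pdx (fun q => q.1) q + aE a q.1 * pdy (fun q => q.1) q)
      / aW a q.1) = fun q => -(aF a q.1) / aW a q.1 := by
    funext q; rw [pdx_fst, pdy_fst]; ring_nf
  have hg : HasDerivAt (fun x => (aW a x)⁻¹)
      (-(deriv a t * deriv (deriv a) t / aW a t) / aW a t ^ 2) t := hW.inv hWne
  have hg2 : DifferentiableAt ℝ (fun x => -(aF a x) / aW a x) t :=
    ((hdF hI ha ht).differentiableAt.neg).div hW.differentiableAt hWne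
  rw [lap1, e1, e2, pdx_comp (p := (t, s)) hg.differentiableAt, pdy_comp (p := (t, s)) hg2, hg.deriv]
  have h2 := aW_sq a t
  have h4 : aW a t ^ 4 = (1 + deriv a t ^ 2) ^ 2 := by rw [← h2]; ring
  calc -(1 / aW a t) * (-(deriv a t * deriv (deriv a) t / aW a t) / aW a t ^ 2 + 0)
      = deriv a t * deriv (deriv a) t / aW a t ^ 4 := by
        rw [add_zero, eq_div_iff (by positivity : aW a t ^ 4 ≠ 0)]
        field_simp
    _ = deriv a t * deriv (deriv a) t / (1 + deriv a t ^ 2) ^ 2 := by rw [h4]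

lemma lap1_eq3 (s : ℝ) :
    lap1 a (fun q => q.2) (t, s) =
      -(deriv (deriv a) t * (t + a t * deriv a t)) / (2 * (1 + deriv a t ^ 2) ^ 2) := by
  have hW := hdW hI ha ht
  have hF := hdF hI ha ht
  have hWne : aW a t ≠ 0 := ne_of_gt (aW_pos a t)
  have e1 : (fun q : ℝ × ℝ => (1 * pdx (fun q => q.2) q - aF a q.1 * pdy (fun q => q.2) q)
      / aW a q.1) = fun q => -(aF a q.1) / aW a q.1 := by
    funext q; rw [pdx_snd, pdy_snd]; ring_nf
  have e2 : (fun q : ℝ × ℝ => (-(aF a q.1) * pdx (fun q => q.2) q + aE a q.1 * pdy (fun q => q.2) q)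
      / aW a q.1) = fun q => aE a q.1 / aW a q.1 := by
    funext q; rw [pdx_snd, pdy_snd]; ring_nf
  have hg : HasDerivAt (fun x => -(aF a x) / aW a x)
      ((-(-(t * deriv (deriv a) t) / 2) * aW a t - -(aF a t) * (deriv a t * deriv (deriv a) t / aW a t))
        / aW a t ^ 2) t := hF.neg.div hW hWne
  have hg2 : DifferentiableAt ℝ (fun x => aE a x / aW a x) t :=
    (diffE hI ha ht).div hW.differentiableAt hWne
  rw [lap1, e1, e2, pdx_comp (p := (t, s)) hg.differentiableAt, pdy_comp (p := (t, s)) hg2, hg.deriv]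
  have h2 := aW_sq a t
  have h4 : aW a t ^ 4 = (1 + deriv a t ^ 2) ^ 2 := by rw [← h2]; ring
  have hne : (1 + deriv a t ^ 2) ≠ 0 := by positivity
  calc -(1 / aW a t) *
      ((-(-(t * deriv (deriv a) t) / 2) * aW a t -
        -(aF a t) * (deriv a t * deriv (deriv a) t / aW a t)) / aW a t ^ 2 + 0)
      = -((t * deriv (deriv a) t / 2) * aW a t ^ 2 +
          aF a t * deriv a t * deriv (deriv a) t) / aW a t ^ 4 := by
        rw [add_zero, eq_div_iff (by positivity : aW a t ^ 4 ≠ 0)]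
        field_simp
        ring
    _ = -((t * deriv (deriv a) t / 2) * (1 + deriv a t ^ 2) +
          aF a t * deriv a t * deriv (deriv a) t) / (1 + deriv a t ^ 2) ^ 2 := by rw [h2, h4]
    _ = -(deriv (deriv a) t * (t + a t * deriv a t)) / (2 * (1 + deriv a t ^ 2) ^ 2) := by
        rw [aF]; field_simp; ring
end


lemma lap1_eq2 {I : Set ℝ} (hI : IsOpen I) {a : ℝ → ℝ} (ha : ContDiffOn ℝ (⊤ : ℕ∞) a I)
    {t : ℝ} (ht : t ∈ I) (s : ℝ) :
    lap1 a (fun q => a q.1) (t, s) =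
      -(deriv (deriv a) t) / (1 + deriv a t ^ 2) ^ 2 := by
  have hW := hdW hI ha ht
  have hWne : aW a t ≠ 0 := ne_of_gt (aW_pos a t)
  have hmem : I ×ˢ (Set.univ : Set ℝ) ∈ nhds ((t, s) : ℝ × ℝ) :=
    (hI.prod isOpen_univ).mem_nhds ⟨ht, trivial⟩
  have e1 : (fun q : ℝ × ℝ => (1 * pdx (fun q => a q.1) q - aF a q.1 * pdy (fun q => a q.1) q)
      / aW a q.1) =ᶠ[nhds ((t, s) : ℝ × ℝ)] fun q => deriv a q.1 / aW a q.1 := by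
    filter_upwards [hmem] with q hq
    have hd : DifferentiableAt ℝ a q.1 := (hda hI ha hq.1).differentiableAt
    rw [pdx_comp hd, pdy_comp hd]
    ring_nf
  have e2 : (fun q : ℝ × ℝ => (-(aF a q.1) * pdx (fun q => a q.1) q + aE a q.1 * pdy (fun q => a q.1) q)
      / aW a q.1) =ᶠ[nhds ((t, s) : ℝ × ℝ)] fun q => -(aF a q.1) * deriv a q.1 / aW a q.1 := by
    filter_upwards [hmem] with q hq
    have hd : DifferentiableAt ℝ a q.1 := (hda hI ha hq.1).differentiableAt
    rw [pdx_comp hd, pdy_comp hd]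
    ring_nf
  have hg : HasDerivAt (fun x => deriv a x / aW a x)
      ((deriv (deriv a) t * aW a t - deriv a t * (deriv a t * deriv (deriv a) t / aW a t))
        / aW a t ^ 2) t := (hda' hI ha ht).div hW hWne
  have hg2 : DifferentiableAt ℝ (fun x => -(aF a x) * deriv a x / aW a x) t :=
    (((hdF hI ha ht).differentiableAt.neg.mul (hda' hI ha ht).differentiableAt)).div
      hW.differentiableAt hWne
  rw [lap1, pdx_congr e1, pdy_congr e2, pdx_comp (p := (t, s)) hg.differentiableAt, pdy_comp (p := (t, s)) hg2, hg.deriv]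
  have h2 := aW_sq a t
  have h4 : aW a t ^ 4 = (1 + deriv a t ^ 2) ^ 2 := by rw [← h2]; ring
  have hne : (1 + deriv a t ^ 2) ≠ 0 := by positivity
  calc -(1 / aW a t) *
      ((deriv (deriv a) t * aW a t - deriv a t * (deriv a t * deriv (deriv a) t / aW a t))
        / aW a t ^ 2 + 0)
      = -(deriv (deriv a) t * aW a t ^ 2 - deriv a t ^ 2 * deriv (deriv a) t) / aW a t ^ 4 := by
        rw [add_zero, eq_div_iff (by positivity : aW a t ^ 4 ≠ 0)]
        field_simp
    _ = -(deriv (deriv a) t * (1 + deriv a t ^ 2) - deriv a t ^ 2 * deriv (deriv a) t)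
        / (1 + deriv a t ^ 2) ^ 2 := by rw [h2, h4]
    _ = -(deriv (deriv a) t) / (1 + deriv a t ^ 2) ^ 2 := by ring_nf

lemma const_on {I : Set ℝ} (hconv : Convex ℝ I) (hIo : IsOpen I) {f : ℝ → ℝ}
    (hf : ∀ x ∈ I, HasDerivAt f 0 x) {x y : ℝ} (hx : x ∈ I) (hy : y ∈ I) : f x = f y := by
  apply hconv.is_const_of_fderivWithin_eq_zero
    (fun z hz => ((hf z hz).differentiableAt).differentiableWithinAt) _ hx hy
  intro z hz
  rw [fderivWithin_of_isOpen hIo hz, (hf z hz).hasFDerivAt.fderiv]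
  ext
  simp


/-- **Theorem 3.1.1 (classification of finite-type surfaces of the first family)**:
`S₁ : r(t,s) = (t, a(t), s)` satisfies `Δr_i = λ_i r_i` for some real constants iff either
`S₁` is minimal (`a″ ≡ 0`, i.e. `a(t) = αt + β`), in which case `λ₁ = λ₂ = λ₃ = 0`, or `S₁` is
the Euclidean circular cylinder (`t² + a(t)² = c`, `c > 0`, i.e. `a(t) = ±√(c − t²)`), in which
case `λ₁ = λ₂ = 1/c`, `λ₃ = 0`. -/
theorem finite_type_S1_classification
    (I : Set ℝ) (hI : IsOpen I) (hIne : I.Nonempty) (hIconn : I.OrdConnected)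
    (a : ℝ → ℝ) (ha : ContDiffOn ℝ (⊤ : ℕ∞) a I) :
    (∃ l1 l2 l3 : ℝ, Sys1 a I l1 l2 l3) ↔
      ((∀ t ∈ I, deriv (deriv a) t = 0) ∧
          (∃ α β : ℝ, ∀ t ∈ I, a t = α * t + β) ∧ Sys1 a I 0 0 0) ∨
        (∃ c : ℝ, 0 < c ∧ (∀ t ∈ I, t ^ 2 + a t ^ 2 = c) ∧
          Sys1 a I (1 / c) (1 / c) 0) := by
  constructor
  · rintro ⟨l1, l2, l3, hSys⟩
    have hconv : Convex ℝ I := convex_iff_ordConnected.mpr hIconn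
    have hDne : ∀ t : ℝ, ((1 + deriv a t ^ 2) ^ 2 : ℝ) ≠ 0 := fun t => by positivity
    have eq1 : ∀ t ∈ I, deriv a t * deriv (deriv a) t / (1 + deriv a t ^ 2) ^ 2 = l1 * t :=
      fun t ht => by have := (hSys t ht 0).1; rwa [lap1_eq1 hI ha ht 0] at this
    have eq2 : ∀ t ∈ I, -(deriv (deriv a) t) / (1 + deriv a t ^ 2) ^ 2 = l2 * a t :=
      fun t ht => by have := (hSys t ht 0).2.1; rwa [lap1_eq2 hI ha ht 0] at this
    have eq3 : ∀ t ∈ I, deriv (deriv a) t * (t + a t * deriv a t) = 0 := fun t ht => by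
      have h0 := (hSys t ht 0).2.2
      rw [lap1_eq3 hI ha ht 0, mul_zero, div_eq_zero_iff] at h0
      rcases h0 with h | h
      · linarith
      · exact absurd h (by positivity)
    by_cases hmin : ∀ t ∈ I, deriv (deriv a) t = 0
    · left
      refine ⟨hmin, ?_, ?_⟩
      · obtain ⟨t₀, ht₀⟩ := hIne
        refine ⟨deriv a t₀, a t₀ - deriv a t₀ * t₀, fun t ht => ?_⟩
        have hconstd : ∀ x ∈ I, deriv a x = deriv a t₀ := fun x hx => by
          refine const_on hconv hI (f := deriv a) (fun z hz => ?_) hx ht₀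
          have := hda' hI ha hz
          rwa [hmin z hz] at this
        have hlin : ∀ x ∈ I, HasDerivAt (fun x => a x - deriv a t₀ * x) 0 x := fun x hx => by
          have h := (hda hI ha hx).sub ((hasDerivAt_id x).const_mul (deriv a t₀))
          have : deriv a x - deriv a t₀ * 1 = 0 := by rw [hconstd x hx]; ring
          rwa [this] at h
        have h := const_on hconv hI hlin ht ht₀
        linarith
      · intro t ht s
        rw [lap1_eq1 hI ha ht s, lap1_eq2 hI ha ht s, lap1_eq3 hI ha ht s, hmin t ht]
        norm_num
    · right
      push_neg at hmin
      obtain ⟨t₀, ht₀, hQ0⟩ := hmin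
      have h20 := eq2 t₀ ht₀
      have hL : -(deriv (deriv a) t₀) / (1 + deriv a t₀ ^ 2) ^ 2 ≠ 0 :=
        div_ne_zero (neg_ne_zero.2 hQ0) (hDne t₀)
      have hl2 : l2 ≠ 0 := fun h => hL (h20.trans (by rw [h, zero_mul]))
      have ha0 : a t₀ ≠ 0 := fun h => hL (h20.trans (by rw [h, mul_zero]))
      have e2' : ∀ t ∈ I, deriv (deriv a) t = -(l2 * a t) * (1 + deriv a t ^ 2) ^ 2 :=
        fun t ht => by
          have h := eq2 t ht
          field_simp at h
          linarith
      have e1' : ∀ t ∈ I, l1 * t = -(l2 * (a t * deriv a t)) := fun t ht => by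
        have h := eq1 t ht
        rw [e2' t ht] at h
        have hD := hDne t
        field_simp at h
        have h2 : (l1 * t + l2 * (a t * deriv a t)) * (1 + deriv a t ^ 2) ^ 2 = 0 := by
          linear_combination (-(1 + deriv a t ^ 2) ^ 2) * h
        have := (mul_eq_zero.1 h2).resolve_right (hDne t)
        linarith
      have e3' : ∀ t ∈ I, a t * (t + a t * deriv a t) = 0 := fun t ht => by
        have h := eq3 t ht
        rw [e2' t ht] at h
        rcases mul_eq_zero.1 h with h' | h'
        · rcases mul_eq_zero.1 h' with h'' | h''
          · have hl2a : l2 * a t = 0 := by linarith [neg_eq_zero.1 h'']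
            rcases mul_eq_zero.1 hl2a with h3 | h3
            · exact absurd h3 hl2
            · rw [h3]; ring
          · exact absurd h'' (hDne t)
        · rw [h']; ring
      set k := l1 / l2 with hk
      have hl1 : l1 = k * l2 := by rw [hk, div_mul_cancel₀ l1 hl2]
      have hprod : ∀ t ∈ I, a t * deriv a t = -(k * t) := fun t ht => by
        have h0 : l2 * (k * t + a t * deriv a t) = 0 := by
          linear_combination (e1' t ht) - t * hl1
        have := (mul_eq_zero.1 h0).resolve_left hl2
        linarith
      have hak : ∀ t ∈ I, a t * t * (1 - k) = 0 := fun t ht => by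
        linear_combination (e3' t ht) - a t * (hprod t ht)
      have hk1 : k = 1 := by
        by_contra hne1
        have hta : ∀ t ∈ I, a t * t = 0 := fun t ht => by
          rcases mul_eq_zero.1 (hak t ht) with h | h
          · exact h
          · exact absurd (by linarith : k = 1) hne1
        have ht00 : t₀ = 0 := by
          rcases mul_eq_zero.1 (hta t₀ ht₀) with h | h
          · exact absurd h ha0
          · exact h
        have hg0 : ∀ x ∈ I, HasDerivAt (fun x => a x ^ 2 + k * x ^ 2) 0 x := fun x hx => by
          have h1 : HasDerivAt (fun x => a x ^ 2 + k * x ^ 2)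
              (2 * a x * deriv a x + k * (2 * x)) x := by
            have hsq : HasDerivAt (fun x => a x ^ 2) (2 * a x * deriv a x) x := by
              have := (hda hI ha hx).fun_pow 2
              simpa [mul_comm, mul_assoc, pow_one] using this
            have hx2 : HasDerivAt (fun x : ℝ => k * x ^ 2) (k * (2 * x)) x := by
              have := ((hasDerivAt_pow 2 x)).const_mul k
              simpa using this
            exact hsq.add hx2
          have : 2 * a x * deriv a x + k * (2 * x) = 0 := by
            linear_combination 2 * (hprod x hx)
          rwa [this] at h1
        obtain ⟨ε, hε, hball⟩ := Metric.isOpen_iff.1 hI t₀ ht₀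
        have hmem : ∀ x : ℝ, |x - t₀| < ε → x ∈ I := fun x hx => hball (by
          rw [Metric.mem_ball, Real.dist_eq]; exact hx)
        have hx1 : t₀ + ε / 2 ∈ I := hmem _ (by rw [add_sub_cancel_left, abs_of_pos (by linarith)]; linarith)
        have hx2 : t₀ + ε / 3 ∈ I := hmem _ (by rw [add_sub_cancel_left, abs_of_pos (by linarith)]; linarith)
        have hc1 := const_on hconv hI hg0 hx1 ht₀
        have hc2 := const_on hconv hI hg0 hx2 ht₀
        have ha1 : a (t₀ + ε / 2) = 0 := by
          rcases mul_eq_zero.1 (hta _ hx1) with h | h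
          · exact h
          · rw [ht00] at h; linarith
        have ha2 : a (t₀ + ε / 3) = 0 := by
          rcases mul_eq_zero.1 (hta _ hx2) with h | h
          · exact h
          · rw [ht00] at h; linarith
        rw [ht00] at hc1 hc2 ha1 ha2 ha0
        simp only [zero_add] at hc1 hc2 ha1 ha2
        rw [ha1] at hc1
        rw [ha2] at hc2
        have hA2 : 0 < a 0 ^ 2 := by positivity
        ring_nf at hc1 hc2
        nlinarith [hc1, hc2, hA2, hε]
      -- cylinder case
      have hprod1 : ∀ t ∈ I, a t * deriv a t = -t := fun t ht => by
        have := hprod t ht; rw [hk1] at this; linarith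
      have hgc : ∀ x ∈ I, HasDerivAt (fun x => x ^ 2 + a x ^ 2) 0 x := fun x hx => by
        have h1 : HasDerivAt (fun x : ℝ => x ^ 2 + a x ^ 2)
            (2 * x + 2 * a x * deriv a x) x := by
          have hsq : HasDerivAt (fun x => a x ^ 2) (2 * a x * deriv a x) x := by
            have := (hda hI ha hx).fun_pow 2
            simpa [mul_comm, mul_assoc, pow_one] using this
          have hx2 : HasDerivAt (fun x : ℝ => x ^ 2) (2 * x) x := by
            simpa using hasDerivAt_pow 2 x
          exact hx2.add hsq
        have : 2 * x + 2 * a x * deriv a x = 0 := by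
          linear_combination 2 * (hprod1 x hx)
        rwa [this] at h1
      have hcpos : 0 < t₀ ^ 2 + a t₀ ^ 2 := by
        have : 0 < a t₀ ^ 2 := by positivity
        nlinarith [sq_nonneg t₀]
      refine ⟨t₀ ^ 2 + a t₀ ^ 2, hcpos, fun t ht => const_on hconv hI hgc ht ht₀, ?_⟩
      set c := t₀ ^ 2 + a t₀ ^ 2 with hcdef
      have hcne : c ≠ 0 := ne_of_gt hcpos
      have hconstc : ∀ t ∈ I, t ^ 2 + a t ^ 2 = c := fun t ht => const_on hconv hI hgc ht ht₀
      intro t ht s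
      have hp := hprod1 t ht
      have hc := hconstc t ht
      -- second derivative relation
      have h2nd : deriv a t * deriv a t + a t * deriv (deriv a) t + 1 = 0 := by
        have hu : HasDerivAt (fun x => a x * deriv a x + x)
            (deriv a t * deriv a t + a t * deriv (deriv a) t + 1) t := by
          exact ((hda hI ha ht).mul (hda' hI ha ht)).add (hasDerivAt_id t)
        have hev : (fun x => a x * deriv a x + x) =ᶠ[nhds t] fun _ => (0 : ℝ) := by
          filter_upwards [hI.mem_nhds ht] with x hx
          have := hprod1 x hx
          linarith
        have h0 : HasDerivAt (fun _ : ℝ => (0 : ℝ))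
            (deriv a t * deriv a t + a t * deriv (deriv a) t + 1) t :=
          hu.congr_of_eventuallyEq hev.symm
        have := h0.unique (hasDerivAt_const t 0)
        linarith
      have han0 : a t ≠ 0 := by
        intro h
        rw [h] at h2nd
        nlinarith [sq_nonneg (deriv a t)]
      refine ⟨?_, ?_, ?_⟩
      · rw [lap1_eq1 hI ha ht s, one_div_mul_eq_div, div_eq_div_iff (hDne t) hcne, ← hc]
        linear_combination (a t * deriv a t * (1 + deriv a t ^ 2)) * h2nd +
          (deriv a t * deriv (deriv a) t * (t - a t * deriv a t) -
            (1 + deriv a t ^ 2) ^ 2) * hp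
      · rw [lap1_eq2 hI ha ht s, one_div_mul_eq_div, div_eq_div_iff (hDne t) hcne, ← hc]
        linear_combination (-(a t) * (1 + deriv a t ^ 2)) * h2nd +
          (-(deriv (deriv a) t) * (t - a t * deriv a t)) * hp
      · rw [lap1_eq3 hI ha ht s]
        have h0 : t + a t * deriv a t = 0 := by linarith [hp]
        rw [h0]
        simp
  · rintro (⟨_, _, hs⟩ | ⟨c, hc, _, hs⟩)
    · exact ⟨0, 0, 0, hs⟩
    · exact ⟨1 / c, 1 / c, 0, hs⟩
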